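/- Let δ > 0 and define g(η) = δ·(η² + η - 1)/(η² - 1) for η > 1. Then g is strictly decreasing on (1, ∞), and g(η) tends to +∞ as η tends to 1 from the right. -/

import Mathlib

open Filter

/-- The deviation threshold `γ_B^TIC(η) = δ(η² + η - 1)/(η² - 1)` is strictly
decreasing on `(1, ∞)` and tends to `+∞` as `η → 1⁺`. -/
theorem stmt_9 (δ : ℝ) (hδ : 0 < δ) :
    StrictAntiOn (fun η : ℝ => δ * (η ^ 2 + η - 1) / (η ^ 2 - 1)) (Set.Ioi 1) ∧
    Tendsto (fun η : ℝ => δ * (η ^ 2 + η - 1) / (η ^ 2 - 1)) (nhdsWithin 1 (Set.Ioi 1))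
      atTop := by
  constructor
  · intro a ha b hb hab
    simp only [Set.mem_Ioi] at ha hb
    have hda : (0:ℝ) < a ^ 2 - 1 := by nlinarith
    have hdb : (0:ℝ) < b ^ 2 - 1 := by nlinarith
    rw [div_lt_div_iff₀ hdb hda]
    nlinarith [mul_pos (sub_pos.2 hab) (by nlinarith : (0:ℝ) < a * b + 1)]
  · have hnum : Tendsto (fun η : ℝ => δ * (η ^ 2 + η - 1)) (nhdsWithin 1 (Set.Ioi 1))
        (nhds δ) := by
      have : Tendsto (fun η : ℝ => δ * (η ^ 2 + η - 1)) (nhds 1) (nhds (δ * (1 ^ 2 + 1 - 1))) :=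
        ((continuous_const.mul ((continuous_pow 2).add continuous_id |>.sub continuous_const))).tendsto 1
      simpa using this.mono_left nhdsWithin_le_nhds
    have hden : Tendsto (fun η : ℝ => η ^ 2 - 1) (nhdsWithin 1 (Set.Ioi 1))
        (nhdsWithin 0 (Set.Ioi 0)) := by
      apply tendsto_nhdsWithin_of_tendsto_nhds_of_eventually_within
      · have : Tendsto (fun η : ℝ => η ^ 2 - 1) (nhds 1) (nhds (1 ^ 2 - 1)) :=
          ((continuous_pow 2).sub continuous_const).tendsto 1
        simpa using this.mono_left nhdsWithin_le_nhds
      · filter_upwards [self_mem_nhdsWithin] with x hx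
        simp only [Set.mem_Ioi] at hx ⊢
        nlinarith
    have hinv : Tendsto (fun η : ℝ => (η ^ 2 - 1)⁻¹) (nhdsWithin 1 (Set.Ioi 1)) atTop :=
      tendsto_inv_nhdsGT_zero.comp hden
    have := hinv.atTop_mul_pos hδ hnum
    simpa [div_eq_mul_inv, mul_comm] using this
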